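/- For any A ∈ ℂ^{n×n}, the intersection of SRG(A) with the real line consists exactly of the real eigenvalues of A: SRG(A) ∩ ℝ = Λ(A) ∩ ℝ (restricting to nonzero points if A is singular with a non-trivially attained zero). -/

import Mathlib

open Matrix

noncomputable def srg {n : ℕ} (A : Matrix (Fin n) (Fin n) ℂ) : Set ℂ :=
  {z | ∃ x : EuclideanSpace ℂ (Fin n), x ≠ 0 ∧ Matrix.toEuclideanLin A x ≠ 0 ∧
    ∃ s : ℝ, (s = 1 ∨ s = -1) ∧
      z = ((‖Matrix.toEuclideanLin A x‖ / ‖x‖ : ℝ) : ℂ) *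
        Complex.exp (((s * Real.arccos ((inner ℂ x (Matrix.toEuclideanLin A x) : ℂ).re /
          (‖x‖ * ‖Matrix.toEuclideanLin A x‖)) : ℝ) : ℂ) * Complex.I)}

noncomputable def srgTheta {n : ℕ} (θ : ℝ) (A : Matrix (Fin n) (Fin n) ℂ) : Set ℂ :=
  (fun z => Complex.exp ((θ : ℂ) * Complex.I) * z) ''
    srg (Complex.exp (-(θ : ℂ) * Complex.I) • A)

lemma spec_eq {n : ℕ} (A : Matrix (Fin n) (Fin n) ℂ) :
    spectrum ℂ (Matrix.toEuclideanLin A) = spectrum ℂ A :=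
  AlgEquiv.spectrum_eq (Matrix.toLinAlgEquiv (PiLp.basisFun 2 ℂ (Fin n))) _

/-- SRG(A) ∩ ℝ consists exactly of the nonzero real eigenvalues of A. -/
theorem stmt15 {n : ℕ} (A : Matrix (Fin n) (Fin n) ℂ) :
    srg A ∩ {z : ℂ | z.im = 0} =
      {z : ℂ | z.im = 0 ∧ z ∈ spectrum ℂ A ∧ z ≠ 0} := by
  ext z
  simp only [Set.mem_inter_iff, Set.mem_setOf_eq, srg]
  set T := Matrix.toEuclideanLin A with hT
  constructor
  · rintro ⟨⟨x, hx, hAx, s, hs, hz⟩, him⟩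
    set c : ℝ := (inner ℂ x (T x) : ℂ).re / (‖x‖ * ‖T x‖) with hc
    set θ := Real.arccos c with hθ
    have hxpos : (0:ℝ) < ‖x‖ := norm_pos_iff.mpr hx
    have hAxpos : (0:ℝ) < ‖T x‖ := norm_pos_iff.mpr hAx
    have hppos : (0:ℝ) < ‖x‖ * ‖T x‖ := mul_pos hxpos hAxpos
    have hzim : z.im = (‖T x‖ / ‖x‖) * Real.sin (s * θ) := by
      rw [hz, Complex.im_ofReal_mul, Complex.exp_ofReal_mul_I_im]
    have hsin : Real.sin θ = 0 := by
      have h0 : (‖T x‖ / ‖x‖) * Real.sin (s * θ) = 0 := by rw [← hzim, him]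
      rcases mul_eq_zero.mp h0 with h | h
      · exact absurd h (div_pos hAxpos hxpos).ne'
      · rcases hs with rfl | rfl
        · simpa using h
        · simp only [neg_one_mul, Real.sin_neg, neg_eq_zero] at h; exact h
    -- bounds on c
    have habs : |(inner ℂ x (T x) : ℂ).re| ≤ ‖x‖ * ‖T x‖ := by
      calc |(inner ℂ x (T x) : ℂ).re| ≤ ‖(inner ℂ x (T x) : ℂ)‖ := Complex.abs_re_le_norm _
        _ ≤ ‖x‖ * ‖T x‖ := norm_inner_le_norm x (T x)
    have hc1 : -1 ≤ c := by
      rw [hc, le_div_iff₀ hppos]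
      nlinarith [abs_le.mp habs]
    have hc2 : c ≤ 1 := by
      rw [hc, div_le_one hppos]
      nlinarith [abs_le.mp habs]
    have hcos : Real.cos θ = c := Real.cos_arccos hc1 hc2
    have hcsq : c ^ 2 = 1 := by
      have := Real.sin_sq_add_cos_sq θ
      rw [hsin, hcos] at this; nlinarith
    have hce : c = 1 ∨ c = -1 := by
      have : (c - 1) * (c + 1) = 0 := by nlinarith
      rcases mul_eq_zero.mp this with h | h
      · left; linarith
      · right; linarith
    -- equality in Cauchy-Schwarz
    have hre : (inner ℂ x (T x) : ℂ).re = c * (‖x‖ * ‖T x‖) :=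
      (div_eq_iff hppos.ne').mp hc.symm |>.symm ▸ rfl
    have hre' : (inner ℂ x (T x) : ℂ).re = c * (‖x‖ * ‖T x‖) := by
      rw [hc]; field_simp
    have hnormeq : ‖(inner ℂ x (T x) : ℂ)‖ = ‖x‖ * ‖T x‖ := by
      refine le_antisymm (norm_inner_le_norm x (T x)) ?_
      calc ‖x‖ * ‖T x‖ = |(inner ℂ x (T x) : ℂ).re| := by
            rw [hre', abs_mul]
            rcases hce with h | h <;> simp [h, abs_of_pos hppos]
        _ ≤ ‖(inner ℂ x (T x) : ℂ)‖ := Complex.abs_re_le_norm _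
    obtain ⟨r, hr0, hr⟩ := (norm_inner_eq_norm_iff hx hAx).mp hnormeq
    have hip : (inner ℂ x (T x) : ℂ) = r * ((‖x‖ : ℝ) : ℂ) ^ 2 := by
      rw [hr, inner_smul_right, inner_self_eq_norm_sq_to_K]
      norm_cast
    have hre2 : (inner ℂ x (T x) : ℂ).re = r.re * ‖x‖ ^ 2 := by
      rw [hip]
      simp [Complex.mul_re, ← Complex.ofReal_pow]
    have hnr : ‖T x‖ = ‖r‖ * ‖x‖ := by rw [hr, norm_smul]
    have hrre : r.re = c * ‖r‖ := by
      have h : r.re * ‖x‖ ^ 2 = (c * ‖r‖) * ‖x‖ ^ 2 := by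
        rw [← hre2, hre', hnr]; ring
      exact mul_right_cancel₀ (pow_ne_zero 2 hxpos.ne') h
    have hrim : r.im = 0 := by
      have h2 : ‖r‖ ^ 2 = r.re * r.re + r.im * r.im := by
        rw [Complex.sq_norm, Complex.normSq_apply]
      have h3 : r.re * r.re = ‖r‖ ^ 2 := by
        rcases hce with h | h <;> rw [h] at hrre <;> rw [hrre] <;> ring
      have h4 : r.im * r.im = 0 := by linarith
      exact mul_self_eq_zero.mp h4
    have hrval : r = ((c * ‖r‖ : ℝ) : ℂ) := by
      apply Complex.ext <;> simp [hrim, hrre]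
    have hexp : Complex.exp (((s * θ : ℝ) : ℂ) * Complex.I) = (c : ℂ) := by
      apply Complex.ext
      · rw [Complex.exp_ofReal_mul_I_re]
        rcases hs with rfl | rfl <;> simp [Real.cos_neg, hcos]
      · rw [Complex.exp_ofReal_mul_I_im]
        rcases hs with rfl | rfl <;> simp [hsin]
    have hzr : z = r := by
      rw [hz, hexp, hrval, hnr]
      rw [mul_div_assoc, div_self hxpos.ne', mul_one]
      push_cast
      ring
    have hTxz : T x = z • x := by rw [hzr, hr]
    refine ⟨him, ?_, hzr ▸ hr0⟩
    rw [← spec_eq]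
    exact Module.End.hasEigenvalue_iff_mem_spectrum.mp
      (Module.End.hasEigenvalue_of_hasEigenvector
        ⟨Module.End.mem_eigenspace_iff.mpr hTxz, hx⟩)
  · rintro ⟨him, hspec, hne⟩
    rw [← spec_eq] at hspec
    have hev : Module.End.HasEigenvalue T z :=
      Module.End.hasEigenvalue_iff_mem_spectrum.mpr hspec
    obtain ⟨x, hvec⟩ := hev.exists_hasEigenvector
    have hx : x ≠ 0 := hvec.2
    have hTxz : T x = z • x := hvec.apply_eq_smul
    have hxpos : (0:ℝ) < ‖x‖ := norm_pos_iff.mpr hx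
    have hzr : z = ((z.re : ℝ) : ℂ) := by
      apply Complex.ext <;> simp [him]
    have hzre : z.re ≠ 0 := by
      intro h; exact hne (by apply Complex.ext <;> simp [him, h])
    have hTx0 : T x ≠ 0 := by rw [hTxz]; exact smul_ne_zero hne hx
    have hip : (inner ℂ x (T x) : ℂ) = z * ((‖x‖ : ℝ) : ℂ) ^ 2 := by
      rw [hTxz, inner_smul_right, inner_self_eq_norm_sq_to_K]
      norm_cast
    have hre : (inner ℂ x (T x) : ℂ).re = z.re * ‖x‖ ^ 2 := by
      rw [hip]
      simp [Complex.mul_re, ← Complex.ofReal_pow, him]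
    have hnTx : ‖T x‖ = |z.re| * ‖x‖ := by
      rw [hTxz, norm_smul]
      congr 1
      rw [hzr, Complex.norm_real, Real.norm_eq_abs]
      simp
    have hcc : (inner ℂ x (T x) : ℂ).re / (‖x‖ * ‖T x‖) = z.re / |z.re| := by
      rw [hre, hnTx]
      have hax : |z.re| ≠ 0 := abs_ne_zero.mpr hzre
      field_simp
    refine ⟨⟨x, hx, hTx0, 1, Or.inl rfl, ?_⟩, him⟩
    rw [hcc]
    rcases lt_or_gt_of_ne hzre with hneg | hpos
    · have h1 : z.re / |z.re| = -1 := by rw [abs_of_neg hneg]; field_simp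
      rw [h1, Real.arccos_neg_one, hnTx, abs_of_neg hneg, one_mul]
      rw [show -z.re * ‖x‖ / ‖x‖ = -z.re from by field_simp]
      rw [Complex.exp_pi_mul_I, hzr]
      simp
    · have h1 : z.re / |z.re| = 1 := by rw [abs_of_pos hpos]; field_simp
      rw [h1, Real.arccos_one, hnTx, abs_of_pos hpos]
      rw [show z.re * ‖x‖ / ‖x‖ = z.re from by field_simp]
      simp [← hzr]
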